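/- arXiv:math/0208028 — 10 statements merged into one kernel-verified Lean document; each statement's English description precedes it below -/
import Mathlib

section
/- Let p be a prime and let g, h be integers with 1 ≤ g ≤ p−1, 1 ≤ h ≤ p−1, and g^h ≡ h (mod p). If h is a primitive root mod p, then g is a primitive root mod p and gcd(h, p−1) = 1. -/
set_option maxHeartbeats 1000000


theorem stmt_2 (p : ℕ) (hp : p.Prime) (g h : ℕ)
    (hg1 : 1 ≤ g) (hg2 : g ≤ p - 1) (hh1 : 1 ≤ h) (hh2 : h ≤ p - 1)
    (hfp : g ^ h ≡ h [MOD p])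
    (hpr : orderOf (h : ZMod p) = p - 1) :
    orderOf (g : ZMod p) = p - 1 ∧ Nat.gcd h (p - 1) = 1 := by
  haveI : Fact p.Prime := ⟨hp⟩
  have hp2 : 2 ≤ p := hp.two_le
  have hgp : g < p := lt_of_le_of_lt hg2 (Nat.sub_lt (by omega) one_pos)
  have hgne : (g : ZMod p) ≠ 0 := by
    rw [Ne, ZMod.natCast_eq_zero_iff]
    intro hdvd
    have := Nat.le_of_dvd (by omega) hdvd
    omega
  have heq : (g : ZMod p) ^ h = (h : ZMod p) := by
    have := (ZMod.natCast_eq_natCast_iff _ _ _).mpr hfp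
    push_cast at this
    exact this
  have hdvd : orderOf (g : ZMod p) ∣ p - 1 :=
    orderOf_dvd_of_pow_eq_one (ZMod.pow_card_sub_one_eq_one hgne)
  have hord : orderOf ((g : ZMod p) ^ h) =
      orderOf (g : ZMod p) / Nat.gcd (orderOf (g : ZMod p)) h := orderOf_pow' _ (by omega)
  rw [heq, hpr] at hord
  set d := orderOf (g : ZMod p) with hd
  set k := Nat.gcd d h with hk
  have hle0 : d / k ≤ d := Nat.div_le_self _ _
  have hdpos : 0 < d := by omega
  have hkpos : 0 < k := Nat.gcd_pos_of_pos_left _ hdpos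
  have hkd : k ∣ d := Nat.gcd_dvd_left _ _
  have hdle : d ≤ p - 1 := Nat.le_of_dvd (by omega) hdvd
  have hle : d / k ≤ d := Nat.div_le_self _ _
  have hdeq : d = p - 1 := by omega
  have hk1 : k = 1 := by
    have : d / k = d := by omega
    rcases hkd with ⟨c, hc⟩
    rw [hc, Nat.mul_div_cancel_left _ hkpos] at this
    nlinarith [hkpos, hdpos]
  refine ⟨hdeq, ?_⟩
  rw [Nat.gcd_comm, ← hdeq]
  exact hk1
end

section
/- Let p be a prime. The number of pairs (g,h) with 1 ≤ g, h ≤ p−1, g^h ≡ h (mod p), and h a primitive root mod p equals the number of pairs (g,h) with 1 ≤ g, h ≤ p−1, g^h ≡ h (mod p), g a primitive root mod p, gcd(h, p−1) = 1, and h a primitive root mod p. -/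
open scoped Classical in
theorem stmt_3 (p : ℕ) (hp : p.Prime) :
    ((Finset.Icc 1 (p - 1) ×ˢ Finset.Icc 1 (p - 1)).filter
      (fun gh : ℕ × ℕ => gh.1 ^ gh.2 ≡ gh.2 [MOD p] ∧
        orderOf ((gh.2 : ZMod p)) = p - 1)).card
    =
    ((Finset.Icc 1 (p - 1) ×ˢ Finset.Icc 1 (p - 1)).filter
      (fun gh : ℕ × ℕ => gh.1 ^ gh.2 ≡ gh.2 [MOD p] ∧
        orderOf ((gh.1 : ZMod p)) = p - 1 ∧
        Nat.gcd gh.2 (p - 1) = 1 ∧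
        orderOf ((gh.2 : ZMod p)) = p - 1)).card := by
  have hp1 : 0 < p - 1 := by have := hp.two_le; omega
  haveI : Fact p.Prime := ⟨hp⟩
  congr 1
  apply Finset.filter_congr
  rintro ⟨g, h⟩ hmem
  simp only [Finset.mem_product, Finset.mem_Icc] at hmem
  obtain ⟨⟨hg1, hg2⟩, hh1, hh2⟩ := hmem
  simp only
  constructor
  · rintro ⟨hmod, hordh⟩
    have hg0 : (g : ZMod p) ≠ 0 := by
      rw [Ne, ZMod.natCast_eq_zero_iff]
      intro hdvd
      have := Nat.le_of_dvd (by omega) hdvd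
      omega
    have heq : (g : ZMod p) ^ h = (h : ZMod p) := by
      have := (ZMod.natCast_eq_natCast_iff _ _ _).mpr hmod
      push_cast at this
      exact this
    have hdvd : orderOf (g : ZMod p) ∣ p - 1 :=
      orderOf_dvd_of_pow_eq_one (ZMod.pow_card_sub_one_eq_one hg0)
    have hdle : orderOf (g : ZMod p) ≤ p - 1 := Nat.le_of_dvd hp1 hdvd
    have hpow : orderOf ((g : ZMod p) ^ h) = p - 1 := by rw [heq]; exact hordh
    rw [orderOf_pow' _ (by omega : h ≠ 0)] at hpow
    have hdivle : orderOf (g : ZMod p) / (orderOf (g : ZMod p)).gcd h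
        ≤ orderOf (g : ZMod p) := Nat.div_le_self _ _
    have hord : orderOf (g : ZMod p) = p - 1 := by omega
    have hgcd : (orderOf (g : ZMod p)).gcd h = 1 := by
      have : orderOf (g : ZMod p) / (orderOf (g : ZMod p)).gcd h
          = orderOf (g : ZMod p) := by omega
      rcases (Nat.div_eq_self).mp this with h0 | h1
      · omega
      · exact h1
    refine ⟨hmod, hord, ?_, hordh⟩
    rw [Nat.gcd_comm, ← hord]
    exact hgcd
  · rintro ⟨hmod, _, _, hordh⟩
    exact ⟨hmod, hordh⟩
end

section
/- Let p be a prime. The following five counts of pairs (g,h) with 1 ≤ g, h ≤ p−1 and g^h ≡ h (mod p) are all equal: (1) those with g a primitive root, gcd(h, p−1) = 1, and h a primitive root; (2) those with g a primitive root and gcd(h, p−1) = 1; (3) those with g a primitive root and h a primitive root; (4) those with gcd(h, p−1) = 1 and h a primitive root; (5) those with h a primitive root. -/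
lemma key_lemma (p : ℕ) (hp : p.Prime) (g h : ℕ)
    (hg : g ∈ Finset.Icc 1 (p-1)) (hh : h ∈ Finset.Icc 1 (p-1))
    (hfp : g ^ h ≡ h [MOD p]) :
    orderOf ((h : ZMod p)) = p - 1 ↔
      (orderOf ((g : ZMod p)) = p - 1 ∧ Nat.gcd h (p-1) = 1) := by
  haveI : Fact p.Prime := ⟨hp⟩
  simp only [Finset.mem_Icc] at hg hh
  have hp2 := hp.two_le
  have hhne : h ≠ 0 := by omega
  have heq : ((g : ZMod p)) ^ h = (h : ZMod p) := by
    have := (ZMod.natCast_eq_natCast_iff _ _ _).2 hfp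
    push_cast at this
    exact this
  have hhne0 : (h : ZMod p) ≠ 0 := by
    intro h0
    rw [ZMod.natCast_eq_zero_iff] at h0
    have := Nat.le_of_dvd (by omega) h0
    omega
  have hgne : (g : ZMod p) ≠ 0 := by
    intro h0
    rw [h0, zero_pow hhne] at heq
    exact hhne0 heq.symm
  have hord : orderOf ((h : ZMod p)) = orderOf ((g : ZMod p)) / Nat.gcd (orderOf ((g : ZMod p))) h := by
    rw [← heq, orderOf_pow' _ hhne]
  constructor
  · intro hPRh
    have hdvd : orderOf ((g : ZMod p)) ∣ p - 1 := ZMod.orderOf_dvd_card_sub_one hgne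
    have hgdvd : Nat.gcd (orderOf ((g : ZMod p))) h ∣ orderOf ((g : ZMod p)) := Nat.gcd_dvd_left _ _
    rw [hord] at hPRh
    have hmul : orderOf ((g : ZMod p)) = Nat.gcd (orderOf ((g : ZMod p))) h * (p - 1) :=
      Nat.eq_mul_of_div_eq_right hgdvd hPRh
    have hle : orderOf ((g : ZMod p)) ≤ p - 1 := Nat.le_of_dvd (by omega) hdvd
    have hgcdpos : 1 ≤ Nat.gcd (orderOf ((g : ZMod p))) h := by
      rcases Nat.eq_zero_or_pos (Nat.gcd (orderOf ((g : ZMod p))) h) with h0 | h0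
      · exact absurd (Nat.eq_zero_of_gcd_eq_zero_right h0) hhne
      · exact h0
    have hg1 : Nat.gcd (orderOf ((g : ZMod p))) h = 1 := by nlinarith
    rw [hg1, one_mul] at hmul
    refine ⟨hmul, ?_⟩
    rw [Nat.gcd_comm, ← hmul]
    exact hg1
  · rintro ⟨hPRg, hRP⟩
    rw [hord, hPRg, Nat.gcd_comm, hRP, Nat.div_one]

open scoped Classical in
theorem stmt_5 (p : ℕ) (hp : p.Prime) :
    let S := Finset.Icc 1 (p - 1) ×ˢ Finset.Icc 1 (p - 1)
    let fp : ℕ × ℕ → Prop := fun gh => gh.1 ^ gh.2 ≡ gh.2 [MOD p]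
    let PR : ℕ → Prop := fun x => orderOf (x : ZMod p) = p - 1
    let RP : ℕ → Prop := fun x => Nat.gcd x (p - 1) = 1
    ((S.filter (fun gh => fp gh ∧ PR gh.1 ∧ RP gh.2 ∧ PR gh.2)).card
      = (S.filter (fun gh => fp gh ∧ PR gh.1 ∧ RP gh.2)).card) ∧
    ((S.filter (fun gh => fp gh ∧ PR gh.1 ∧ RP gh.2 ∧ PR gh.2)).card
      = (S.filter (fun gh => fp gh ∧ PR gh.1 ∧ PR gh.2)).card) ∧
    ((S.filter (fun gh => fp gh ∧ PR gh.1 ∧ RP gh.2 ∧ PR gh.2)).card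
      = (S.filter (fun gh => fp gh ∧ RP gh.2 ∧ PR gh.2)).card) ∧
    ((S.filter (fun gh => fp gh ∧ PR gh.1 ∧ RP gh.2 ∧ PR gh.2)).card
      = (S.filter (fun gh => fp gh ∧ PR gh.2)).card) := by
  intro S fp PR RP
  have key : ∀ gh ∈ S, (fp gh → (PR gh.2 ↔ PR gh.1 ∧ RP gh.2)) := by
    rintro ⟨g, h⟩ hgh hfp
    simp only [S, Finset.mem_product] at hgh
    exact key_lemma p hp g h hgh.1 hgh.2 hfp
  refine ⟨?_, ?_, ?_, ?_⟩ <;>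
  · congr 1
    apply Finset.filter_congr
    intro gh hgh
    have := key gh hgh
    constructor <;> (intro hx; tauto)
end

section
/- Let p be a prime and let h, a be integers with 1 ≤ h, a ≤ p−1 such that gcd(gcd(h, a), p−1) = 1. If g₁ and g₂ are integers with 1 ≤ g₁, g₂ ≤ p−1 satisfying g₁^h ≡ g₂^h ≡ a (mod p) and g₁^a ≡ g₂^a ≡ h (mod p), then g₁ = g₂. In other words, when gcd(h, a, p−1) = 1, at most one base g yields the two-cycle (h, a). -/
theorem stmt_8 (p : ℕ) (hp : p.Prime) (h a : ℕ)
    (hh1 : 1 ≤ h) (hh2 : h ≤ p - 1) (ha1 : 1 ≤ a) (ha2 : a ≤ p - 1)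
    (hgcd : Nat.gcd (Nat.gcd h a) (p - 1) = 1)
    (g₁ g₂ : ℕ) (hg₁1 : 1 ≤ g₁) (hg₁2 : g₁ ≤ p - 1) (hg₂1 : 1 ≤ g₂) (hg₂2 : g₂ ≤ p - 1)
    (e1 : g₁ ^ h ≡ a [MOD p]) (e2 : g₂ ^ h ≡ a [MOD p])
    (e3 : g₁ ^ a ≡ h [MOD p]) (e4 : g₂ ^ a ≡ h [MOD p]) :
    g₁ = g₂ := by
  haveI : Fact p.Prime := ⟨hp⟩
  have hp2 : 2 ≤ p := hp.two_le
  have hlt : ∀ m : ℕ, 1 ≤ m → m ≤ p - 1 → m < p := fun m h1 h2 => lt_of_le_of_lt h2 (by omega)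
  have hne : ∀ m : ℕ, 1 ≤ m → m ≤ p - 1 → (m : ZMod p) ≠ 0 := by
    intro m h1 h2 hm
    rw [ZMod.natCast_eq_zero_iff] at hm
    have := Nat.le_of_dvd (by omega) hm
    omega
  have hx : (g₁ : ZMod p) ≠ 0 := hne g₁ hg₁1 hg₁2
  have hy : (g₂ : ZMod p) ≠ 0 := hne g₂ hg₂1 hg₂2
  have E1 : (g₁ : ZMod p) ^ h = (a : ZMod p) := by
    have := (ZMod.natCast_eq_natCast_iff _ _ _).mpr e1; push_cast at this; exact this
  have E2 : (g₂ : ZMod p) ^ h = (a : ZMod p) := by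
    have := (ZMod.natCast_eq_natCast_iff _ _ _).mpr e2; push_cast at this; exact this
  have E3 : (g₁ : ZMod p) ^ a = (h : ZMod p) := by
    have := (ZMod.natCast_eq_natCast_iff _ _ _).mpr e3; push_cast at this; exact this
  have E4 : (g₂ : ZMod p) ^ a = (h : ZMod p) := by
    have := (ZMod.natCast_eq_natCast_iff _ _ _).mpr e4; push_cast at this; exact this
  set u : ZMod p := (g₁ : ZMod p) * (g₂ : ZMod p)⁻¹ with hu
  have hyh : (g₂ : ZMod p) ^ h ≠ 0 := pow_ne_zero _ hy
  have hya : (g₂ : ZMod p) ^ a ≠ 0 := pow_ne_zero _ hy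
  have uh : u ^ h = 1 := by
    rw [hu, mul_pow, inv_pow, E1, ← E2, mul_inv_cancel₀ hyh]
  have ua : u ^ a = 1 := by
    rw [hu, mul_pow, inv_pow, E3, ← E4, mul_inv_cancel₀ hya]
  have hune : u ≠ 0 := mul_ne_zero hx (inv_ne_zero hy)
  have up : u ^ (p - 1) = 1 := ZMod.pow_card_sub_one_eq_one hune
  have d1 : orderOf u ∣ h := orderOf_dvd_of_pow_eq_one uh
  have d2 : orderOf u ∣ a := orderOf_dvd_of_pow_eq_one ua
  have d3 : orderOf u ∣ p - 1 := orderOf_dvd_of_pow_eq_one up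
  have : orderOf u ∣ 1 := hgcd ▸ Nat.dvd_gcd (Nat.dvd_gcd d1 d2) d3
  have hu1 : u = 1 := orderOf_eq_one_iff.mp (Nat.eq_one_of_dvd_one this)
  have hxy : (g₁ : ZMod p) = (g₂ : ZMod p) := by
    have := congrArg (· * (g₂ : ZMod p)) hu1
    simpa [hu, mul_assoc, inv_mul_cancel₀ hy] using this
  have := (ZMod.natCast_eq_natCast_iff _ _ _).mp hxy
  have := Nat.ModEq.eq_of_lt_of_lt this (hlt g₁ hg₁1 hg₁2) (hlt g₂ hg₂1 hg₂2)
  exact this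
end

section
/- Let p be a prime and let h, a be integers with 1 ≤ h, a ≤ p−1 and gcd(h, p−1) = 1. Then h^h ≡ a^a (mod p) if and only if there exists a unique integer g with 1 ≤ g ≤ p−1 such that g^h ≡ a (mod p) and g^a ≡ h (mod p). -/
theorem stmt_9 (p : ℕ) (hp : p.Prime) (h a : ℕ)
    (hh1 : 1 ≤ h) (hh2 : h ≤ p - 1) (ha1 : 1 ≤ a) (ha2 : a ≤ p - 1)
    (hrp : Nat.gcd h (p - 1) = 1) :
    h ^ h ≡ a ^ a [MOD p] ↔
      ∃! g : ℕ, 1 ≤ g ∧ g ≤ p - 1 ∧ g ^ h ≡ a [MOD p] ∧ g ^ a ≡ h [MOD p] := by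
  haveI := Fact.mk hp
  have hp2 : 2 ≤ p := hp.two_le
  -- obtain an inverse of h modulo p - 1
  obtain ⟨h', q, hq⟩ : ∃ h' q, h * h' = 1 + q * (p - 1) := by
    rcases Nat.lt_or_ge (p - 1) 2 with h1 | h2
    · have : p - 1 = 1 := by omega
      have : h = 1 := by omega
      exact ⟨1, 0, by omega⟩
    · obtain ⟨b, -, hb⟩ := Nat.exists_mul_mod_eq_one_of_coprime hrp h2
      refine ⟨b, h * b / (p - 1), ?_⟩
      rw [Nat.mul_comm (h * b / (p - 1)) (p - 1)]
      have := Nat.div_add_mod (h * b) (p - 1)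
      omega
  have key : ∀ x : ZMod p, x ≠ 0 → x ^ (h * h') = x := by
    intro x hx
    rw [hq, pow_add, pow_one, mul_comm q, pow_mul, ZMod.pow_card_sub_one_eq_one hx, one_pow, mul_one]
  have hane : (a : ZMod p) ≠ 0 := by
    rw [Ne, ZMod.natCast_eq_zero_iff]
    intro hd
    have := Nat.le_of_dvd (by omega) hd
    omega
  constructor
  · intro hha
    have hha' : ((h : ZMod p)) ^ h = (a : ZMod p) ^ a := by
      have := (ZMod.natCast_eq_natCast_iff _ _ _).mpr hha
      push_cast at this
      exact this
    have hhne : (h : ZMod p) ≠ 0 := by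
      rw [Ne, ZMod.natCast_eq_zero_iff]
      intro hd
      have := Nat.le_of_dvd (by omega) hd
      omega
    set g0 : ZMod p := (a : ZMod p) ^ h' with hg0
    have hg0ne : g0 ≠ 0 := pow_ne_zero _ hane
    have hg0h : g0 ^ h = (a : ZMod p) := by
      rw [hg0, ← pow_mul, mul_comm, key _ hane]
    have hg0a : g0 ^ a = (h : ZMod p) := by
      rw [hg0, ← pow_mul]
      have : (h : ZMod p) = ((h : ZMod p) ^ h) ^ h' := by
        rw [← pow_mul, key _ hhne]
      rw [this, hha', ← pow_mul, Nat.mul_comm h' a]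
    refine ⟨g0.val, ⟨?_, ?_, ?_, ?_⟩, ?_⟩
    · have : g0.val ≠ 0 := by
        intro h0
        exact hg0ne (by rwa [← ZMod.val_eq_zero])
      omega
    · have := ZMod.val_lt g0
      omega
    · rw [← ZMod.natCast_eq_natCast_iff]
      push_cast
      rw [ZMod.natCast_val, ZMod.cast_id, hg0h]
    · rw [← ZMod.natCast_eq_natCast_iff]
      push_cast
      rw [ZMod.natCast_val, ZMod.cast_id, hg0a]
    · rintro g1 ⟨hg11, hg12, hg13, hg14⟩
      have hcast : ((g1 : ZMod p)) ^ h = (a : ZMod p) := by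
        have := (ZMod.natCast_eq_natCast_iff _ _ _).mpr hg13
        push_cast at this
        exact this
      have hg1ne : (g1 : ZMod p) ≠ 0 := by
        rw [Ne, ZMod.natCast_eq_zero_iff]
        intro hd
        have := Nat.le_of_dvd (by omega) hd
        omega
      have : (g1 : ZMod p) = g0 := by
        calc (g1 : ZMod p) = ((g1 : ZMod p) ^ h) ^ h' := by rw [← pow_mul, key _ hg1ne]
        _ = g0 := by rw [hcast, hg0]
      rw [← this, ZMod.val_natCast_of_lt (by omega)]
  · rintro ⟨g, ⟨hg1, hg2, hg3, hg4⟩, _⟩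
    calc h ^ h ≡ (g ^ a) ^ h [MOD p] := (hg4.symm).pow h
      _ = (g ^ h) ^ a := by rw [← pow_mul, mul_comm, pow_mul]
      _ ≡ a ^ a [MOD p] := hg3.pow a
end

section
/- Let p be a prime. The number of triples (g,h,a) with 1 ≤ g, h, a ≤ p−1 satisfying g^h ≡ a (mod p), g^a ≡ h (mod p), and gcd(h, p−1) = 1 equals the number of pairs (h,a) with 1 ≤ h, a ≤ p−1 satisfying h^h ≡ a^a (mod p) and gcd(h, p−1) = 1. -/
private lemma powbij {p : ℕ} [Fact p.Prime] {h : ℕ} (hcop : Nat.gcd h (p - 1) = 1) :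
    Function.Bijective (fun u : (ZMod p)ˣ => u ^ h) := by
  have hc : (Nat.card (ZMod p)ˣ).Coprime h := by
    rw [Nat.card_eq_fintype_card, ZMod.card_units_eq_totient,
      Nat.totient_prime (Fact.out : p.Prime)]
    exact Nat.coprime_comm.mp hcop
  exact (powCoprime hc).bijective

open scoped Classical in
theorem stmt_10 (p : ℕ) (hp : p.Prime) :
    ((Finset.Icc 1 (p - 1) ×ˢ Finset.Icc 1 (p - 1) ×ˢ Finset.Icc 1 (p - 1)).filter
      (fun t : ℕ × ℕ × ℕ => t.1 ^ t.2.1 ≡ t.2.2 [MOD p] ∧ t.1 ^ t.2.2 ≡ t.2.1 [MOD p] ∧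
        Nat.gcd t.2.1 (p - 1) = 1)).card
    =
    ((Finset.Icc 1 (p - 1) ×ˢ Finset.Icc 1 (p - 1)).filter
      (fun ha : ℕ × ℕ => ha.1 ^ ha.1 ≡ ha.2 ^ ha.2 [MOD p] ∧
        Nat.gcd ha.1 (p - 1) = 1)).card := by
  haveI : Fact p.Prime := ⟨hp⟩
  have hp2 : 2 ≤ p := hp.two_le
  -- basic facts
  have hmem : ∀ x : ℕ, x ∈ Finset.Icc 1 (p - 1) ↔ 1 ≤ x ∧ x ≤ p - 1 := by
    intro x; simp [Finset.mem_Icc]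
  have hne : ∀ x : ℕ, x ∈ Finset.Icc 1 (p - 1) → (x : ZMod p) ≠ 0 := by
    intro x hx
    rw [hmem] at hx
    rw [Ne, ZMod.natCast_eq_zero_iff]
    intro hdvd
    have := Nat.le_of_dvd (by omega) hdvd
    omega
  have hval : ∀ x : ℕ, x ∈ Finset.Icc 1 (p - 1) → (x : ZMod p).val = x := by
    intro x hx
    rw [hmem] at hx
    exact ZMod.val_cast_of_lt (by omega)
  apply Finset.card_bij (fun t _ => (t.2.1, t.2.2))
  · rintro ⟨g, h, a⟩ ht
    simp only [Finset.mem_filter, Finset.mem_product] at ht ⊢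
    obtain ⟨⟨hg, hh, ha⟩, e1, e2, hcop⟩ := ht
    refine ⟨⟨hh, ha⟩, ?_, hcop⟩
    rw [← ZMod.natCast_eq_natCast_iff] at e1 e2 ⊢
    push_cast at e1 e2 ⊢
    calc (h : ZMod p) ^ h = ((g:ZMod p) ^ a) ^ h := by rw [e2]
    _ = ((g:ZMod p) ^ h) ^ a := by rw [← pow_mul, ← pow_mul, Nat.mul_comm]
    _ = (a : ZMod p) ^ a := by rw [e1]
  · rintro ⟨g1, h1, a1⟩ ht1 ⟨g2, h2, a2⟩ ht2 heq
    simp only [Prod.mk.injEq] at heq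
    obtain ⟨rfl, rfl⟩ := heq
    simp only [Finset.mem_filter, Finset.mem_product] at ht1 ht2
    obtain ⟨⟨hg1, hh, ha⟩, e1, _, hcop⟩ := ht1
    obtain ⟨⟨hg2, -, -⟩, e1', -, -⟩ := ht2
    have hbij := powbij (p := p) hcop
    have hg1ne := hne g1 hg1
    have hg2ne := hne g2 hg2
    rw [← ZMod.natCast_eq_natCast_iff] at e1 e1'
    push_cast at e1 e1'
    have : (Units.mk0 (g1 : ZMod p) hg1ne) ^ h1 = (Units.mk0 (g2 : ZMod p) hg2ne) ^ h1 := by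
      ext
      push_cast
      simp only [Units.val_mk0]
      rw [e1, e1']
    have := hbij.injective this
    have : (g1 : ZMod p) = (g2 : ZMod p) := by
      have := congrArg Units.val this
      simpa using this
    have := congrArg ZMod.val this
    rw [hval g1 hg1, hval g2 hg2] at this
    simp [this]
  · rintro ⟨h, a⟩ hha
    simp only [Finset.mem_filter, Finset.mem_product] at hha
    obtain ⟨⟨hh, ha⟩, e, hcop⟩ := hha
    have hbij := powbij (p := p) hcop
    have hane := hne a ha
    have hhne := hne h hh
    set A := Units.mk0 (a : ZMod p) hane with hA
    set H := Units.mk0 (h : ZMod p) hhne with hH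
    obtain ⟨u, hu⟩ := hbij.surjective A
    simp only at hu
    have hune : (u : ZMod p) ≠ 0 := u.ne_zero
    have hgmem : u.val.val ∈ Finset.Icc 1 (p - 1) := by
      rw [hmem]
      have h1 : (u : ZMod p).val < p := ZMod.val_lt _
      have h2 : (u : ZMod p).val ≠ 0 := by
        intro h0
        apply hune
        exact (ZMod.val_eq_zero _).mp h0
      omega
    have hcast : ((u.val.val : ℕ) : ZMod p) = (u : ZMod p) := by
      simp [ZMod.natCast_val, ZMod.cast_id]
    refine ⟨⟨u.val.val, h, a⟩, ?_, rfl⟩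
    simp only [Finset.mem_filter, Finset.mem_product]
    -- key equations in units
    have keyh : (u : ZMod p) ^ h = (a : ZMod p) := by
      have := congrArg Units.val hu
      simpa [hA] using this
    -- u^a = H
    have e' : (a : ZMod p) ^ a = (h : ZMod p) ^ h := by
      rw [← ZMod.natCast_eq_natCast_iff] at e
      push_cast at e
      exact e.symm
    have keya : u ^ a = H := by
      apply hbij.injective
      simp only
      rw [← pow_mul, Nat.mul_comm, pow_mul, hu]
      ext
      push_cast
      simp only [hA, hH, Units.val_mk0]
      rw [e']
    have keya' : (u : ZMod p) ^ a = (h : ZMod p) := by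
      have := congrArg Units.val keya
      simpa [hH] using this
    refine ⟨⟨hgmem, hh, ha⟩, ?_, ?_, hcop⟩
    · rw [← ZMod.natCast_eq_natCast_iff]
      push_cast
      rw [hcast, keyh]
    · rw [← ZMod.natCast_eq_natCast_iff]
      push_cast
      rw [hcast, keya']
end

section
/- Let n be a squarefree positive integer. Then, as an identity of rational numbers, ∑_{m ∣ n} (φ(m)³/m²) · (∑_{d ∣ n/m} φ(d)/d)² = ∏_{q ∣ n, q prime} (q + 1 − 1/q), where φ is Euler's totient function and the product is over the prime divisors q of n. -/
open ArithmeticFunction Finset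

noncomputable def totAF : ArithmeticFunction ℚ := ⟨fun n => (Nat.totient n : ℚ), by simp⟩

lemma totAF_apply (n : ℕ) : totAF n = (Nat.totient n : ℚ) := rfl

lemma totAF_mult : totAF.IsMultiplicative :=
  ⟨by simp [totAF_apply], fun h => by simp [totAF_apply, Nat.totient_mul h]⟩

noncomputable def idQ : ArithmeticFunction ℚ := (ArithmeticFunction.id : ArithmeticFunction ℕ)

lemma idQ_apply (n : ℕ) : idQ n = (n : ℚ) := by simp [idQ, natCoe_apply]

lemma idQ_mult : idQ.IsMultiplicative := isMultiplicative_id.natCast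

noncomputable def gAF : ArithmeticFunction ℚ := (ArithmeticFunction.zeta : ArithmeticFunction ℚ) * (totAF.pdiv idQ)

noncomputable def hAF : ArithmeticFunction ℚ := (totAF.ppow 3).pdiv (idQ.ppow 2)

noncomputable def FAF : ArithmeticFunction ℚ := hAF * (gAF.pmul gAF)

lemma gAF_apply (k : ℕ) : gAF k = ∑ d ∈ k.divisors, (Nat.totient d : ℚ) / d := by
  rw [gAF, coe_zeta_mul_apply]
  exact Finset.sum_congr rfl fun d _ => by rw [pdiv_apply, totAF_apply, idQ_apply]

lemma hAF_apply (m : ℕ) : hAF m = (Nat.totient m : ℚ) ^ 3 / (m : ℚ) ^ 2 := by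
  rw [hAF, pdiv_apply, ppow_apply (by norm_num), ppow_apply (by norm_num),
    totAF_apply, idQ_apply]

lemma gAF_mult : gAF.IsMultiplicative :=
  isMultiplicative_zeta.natCast.mul (totAF_mult.pdiv idQ_mult)

lemma hAF_mult : hAF.IsMultiplicative := (totAF_mult.ppow).pdiv (idQ_mult.ppow)

lemma FAF_mult : FAF.IsMultiplicative := hAF_mult.mul (gAF_mult.pmul gAF_mult)

lemma FAF_apply (n : ℕ) :
    FAF n = ∑ m ∈ n.divisors, ((Nat.totient m : ℚ) ^ 3 / (m : ℚ) ^ 2) *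
        (∑ d ∈ (n / m).divisors, (Nat.totient d : ℚ) / (d : ℚ)) ^ 2 := by
  rw [FAF, mul_apply, Nat.sum_divisorsAntidiagonal (fun m k => hAF m * (gAF.pmul gAF) k)]
  refine Finset.sum_congr rfl fun m hm => ?_
  rw [hAF_apply, pmul_apply, gAF_apply]; ring

lemma FAF_prime (p : ℕ) (hp : p.Prime) : FAF p = (p : ℚ) + 1 - 1 / p := by
  have hp0 : (p : ℚ) ≠ 0 := Nat.cast_ne_zero.mpr hp.pos.ne'
  rw [FAF_apply p, hp.divisors, Finset.sum_pair (Ne.symm hp.ne_one), Nat.div_one,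
    Nat.div_self hp.pos, hp.divisors, Nat.divisors_one,
    Finset.sum_pair (Ne.symm hp.ne_one), Finset.sum_singleton]
  simp only [Nat.totient_one, Nat.totient_prime hp, Nat.cast_sub hp.one_lt.le, Nat.cast_one]
  field_simp
  ring

theorem stmt_12 (n : ℕ) (hn : 0 < n) (hsf : Squarefree n) :
    ∑ m ∈ n.divisors, ((Nat.totient m : ℚ) ^ 3 / (m : ℚ) ^ 2) *
        (∑ d ∈ (n / m).divisors, (Nat.totient d : ℚ) / (d : ℚ)) ^ 2
    = ∏ q ∈ n.primeFactors, ((q : ℚ) + 1 - 1 / (q : ℚ)) := by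
  rw [← FAF_apply n]
  have := FAF_mult.map_prod_of_subset_primeFactors n n.primeFactors le_rfl
  rw [Nat.prod_primeFactors_of_squarefree hsf] at this
  rw [this]
  exact Finset.prod_congr rfl fun q hq => FAF_prime q (Nat.prime_of_mem_primeFactors hq)
end

section
/- Let n be a positive integer. Then, as an identity of rational numbers, ∑_{m ∣ n} (φ(m)/m²) · (∑_{d ∣ n/m} φ(d·m)/d)² = ∏_{q ∣ n, q prime} ( ∑_{β=0}^{α_q} φ(q^β) · [(1 − 1/q)(α_q − β) + φ(q^β)/q^β]² ), where α_q is the exponent of the prime q in the factorization of n and φ is Euler's totient function. -/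
open Finset

private lemma sum_divisors_coprime {M : Type*} [AddCommMonoid M] {x y : ℕ}
    (hx : x ≠ 0) (hy : y ≠ 0) (h : Nat.Coprime x y) (f : ℕ → M) :
    ∑ d ∈ (x * y).divisors, f d
      = ∑ p ∈ x.divisors ×ˢ y.divisors, f (p.1 * p.2) := by
  refine Finset.sum_nbij' (fun d => (Nat.gcd d x, Nat.gcd d y)) (fun p => p.1 * p.2)
    ?_ ?_ ?_ ?_ ?_
  · intro d hd
    simp only [Finset.mem_product, Nat.mem_divisors]
    exact ⟨⟨Nat.gcd_dvd_right _ _, hx⟩, ⟨Nat.gcd_dvd_right _ _, hy⟩⟩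
  · rintro ⟨a, b⟩ hab
    simp only [Finset.mem_product, Nat.mem_divisors] at hab
    exact Nat.mem_divisors.mpr ⟨mul_dvd_mul hab.1.1 hab.2.1, mul_ne_zero hx hy⟩
  · intro d hd
    rw [Nat.mem_divisors] at hd
    dsimp only
    rw [← Nat.Coprime.gcd_mul d h, Nat.gcd_eq_left hd.1]
  · rintro ⟨a, b⟩ hab
    simp only [Finset.mem_product, Nat.mem_divisors] at hab
    obtain ⟨⟨ha, -⟩, hb, -⟩ := hab
    have hbx : Nat.Coprime b x := Nat.Coprime.coprime_dvd_left hb h.symm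
    have hay : Nat.Coprime a y := Nat.Coprime.coprime_dvd_left ha h
    dsimp only
    rw [Prod.mk.injEq]
    constructor
    · rw [Nat.Coprime.gcd_mul_right_cancel a hbx, Nat.gcd_eq_left ha]
    · rw [Nat.Coprime.gcd_mul_left_cancel b hay, Nat.gcd_eq_left hb]
  · intro d hd
    rw [Nat.mem_divisors] at hd
    dsimp only
    rw [← Nat.Coprime.gcd_mul d h, Nat.gcd_eq_left hd.1]

private def F (n : ℕ) : ℚ :=
  ∑ m ∈ n.divisors, ((Nat.totient m : ℚ) / (m : ℚ) ^ 2) *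
      (∑ d ∈ (n / m).divisors, (Nat.totient (d * m) : ℚ) / (d : ℚ)) ^ 2

private lemma F_one : F 1 = 1 := by
  simp [F]

private lemma F_mul {x y : ℕ} (h : Nat.Coprime x y) : F (x * y) = F x * F y := by
  rcases eq_or_ne x 0 with rfl | hx
  · obtain rfl : y = 1 := Nat.coprime_zero_left y |>.mp h
    simp [F]
  rcases eq_or_ne y 0 with rfl | hy
  · obtain rfl : x = 1 := Nat.coprime_zero_right x |>.mp h
    simp [F]
  unfold F
  rw [sum_divisors_coprime hx hy h, Finset.sum_mul_sum, ← Finset.sum_product']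
  apply Finset.sum_congr rfl
  rintro ⟨a, b⟩ hab
  simp only [Finset.mem_product, Nat.mem_divisors] at hab
  obtain ⟨⟨ha, -⟩, hb, -⟩ := hab
  have ha0 : a ≠ 0 := fun h0 => hx (by simpa [h0] using ha)
  have hb0 : b ≠ 0 := fun h0 => hy (by simpa [h0] using hb)
  have hxa : x / a ≠ 0 := by
    have := Nat.div_pos (Nat.le_of_dvd (Nat.pos_of_ne_zero hx) ha) (Nat.pos_of_ne_zero ha0)
    omega
  have hyb : y / b ≠ 0 := by
    have := Nat.div_pos (Nat.le_of_dvd (Nat.pos_of_ne_zero hy) hb) (Nat.pos_of_ne_zero hb0)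
    omega
  have hcop : Nat.Coprime (x / a) (y / b) :=
    Nat.Coprime.coprime_dvd_left (Nat.div_dvd_of_dvd ha)
      (Nat.Coprime.coprime_dvd_right (Nat.div_dvd_of_dvd hb) h)
  have hdivs : x * y / (a * b) = (x / a) * (y / b) := (Nat.div_mul_div_comm ha hb).symm
  rw [hdivs]
  have inner : ∑ d ∈ ((x / a) * (y / b)).divisors, (Nat.totient (d * (a * b)) : ℚ) / (d : ℚ)
      = (∑ d ∈ (x / a).divisors, (Nat.totient (d * a) : ℚ) / (d : ℚ)) *
        (∑ d ∈ (y / b).divisors, (Nat.totient (d * b) : ℚ) / (d : ℚ)) := by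
    rw [sum_divisors_coprime hxa hyb hcop, Finset.sum_mul_sum, ← Finset.sum_product']
    apply Finset.sum_congr rfl
    rintro ⟨d1, d2⟩ hd
    simp only [Finset.mem_product, Nat.mem_divisors] at hd
    obtain ⟨⟨hd1, -⟩, hd2, -⟩ := hd
    have h1 : d1 * a ∣ x := by
      have := (Nat.dvd_div_iff_mul_dvd ha).mp hd1
      rwa [mul_comm] at this
    have h2 : d2 * b ∣ y := by
      have := (Nat.dvd_div_iff_mul_dvd hb).mp hd2
      rwa [mul_comm] at this
    have harr : d1 * d2 * (a * b) = (d1 * a) * (d2 * b) := by ring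
    rw [harr, Nat.totient_mul ((Nat.Coprime.coprime_dvd_left h1 h).coprime_dvd_right h2)]
    push_cast
    rw [div_mul_div_comm]
  rw [inner]
  have hcop_ab : Nat.Coprime a b := (Nat.Coprime.coprime_dvd_left ha h).coprime_dvd_right hb
  rw [Nat.totient_mul hcop_ab]
  push_cast
  ring

private lemma F_pp {q : ℕ} (hq : q.Prime) (α : ℕ) :
    F (q ^ α) = ∑ β ∈ Finset.range (α + 1),
      (Nat.totient (q ^ β) : ℚ) *
        ((1 - 1 / (q : ℚ)) * ((α : ℚ) - (β : ℚ)) +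
          (Nat.totient (q ^ β) : ℚ) / (q : ℚ) ^ β) ^ 2 := by
  have hq0 : (q : ℚ) ≠ 0 := Nat.cast_ne_zero.mpr hq.ne_zero
  unfold F
  rw [Nat.sum_divisors_prime_pow hq]
  apply Finset.sum_congr rfl
  intro γ hγ
  rw [Finset.mem_range, Nat.lt_succ_iff] at hγ
  have hdiv : q ^ α / q ^ γ = q ^ (α - γ) := Nat.pow_div hγ hq.pos
  rw [hdiv, Nat.sum_divisors_prime_pow hq]
  have key : ∑ δ ∈ Finset.range (α - γ + 1), (Nat.totient (q ^ δ * q ^ γ) : ℚ) / ((q ^ δ : ℕ) : ℚ)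
      = (q : ℚ) ^ γ * ((1 - 1 / (q : ℚ)) * ((α : ℚ) - (γ : ℚ)) +
          (Nat.totient (q ^ γ) : ℚ) / (q : ℚ) ^ γ) := by
    rcases Nat.eq_zero_or_pos γ with rfl | hγpos
    · simp only [pow_zero, mul_one, Nat.sub_zero, Nat.cast_zero, sub_zero, Nat.totient_one,
        Nat.cast_one, one_mul, div_one]
      rw [Finset.sum_range_succ']
      have hterm : ∀ i, (Nat.totient (q ^ (i + 1)) : ℚ) / ((q ^ (i + 1) : ℕ) : ℚ)
          = 1 - 1 / (q : ℚ) := by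
        intro i
        rw [Nat.totient_prime_pow_succ hq]
        push_cast [hq.one_le]
        field_simp
        ring
      rw [Finset.sum_congr rfl (fun i _ => hterm i), Finset.sum_const, Finset.card_range,
        nsmul_eq_mul]
      norm_num
      ring
    · obtain ⟨g, rfl⟩ : ∃ g, γ = g + 1 := ⟨γ - 1, by omega⟩
      have hterm : ∀ δ, (Nat.totient (q ^ δ * q ^ (g + 1)) : ℚ) / ((q ^ δ : ℕ) : ℚ)
          = (q : ℚ) ^ g * ((q : ℚ) - 1) := by
        intro δ
        rw [← pow_add, show δ + (g + 1) = (δ + g) + 1 by ring, Nat.totient_prime_pow_succ hq]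
        push_cast [hq.one_le]
        rw [pow_add]
        field_simp
      rw [Finset.sum_congr rfl (fun δ _ => hterm δ), Finset.sum_const, Finset.card_range,
        nsmul_eq_mul, Nat.totient_prime_pow_succ hq]
      push_cast [hq.one_le, Nat.cast_sub hγ]
      have hqpow : (q : ℚ) ^ (g + 1) ≠ 0 := pow_ne_zero _ hq0
      field_simp
      ring
  rw [key]
  have hpow : ((q ^ γ : ℕ) : ℚ) = (q : ℚ) ^ γ := by push_cast; ring
  rw [hpow]
  have hqγ : (q : ℚ) ^ γ ≠ 0 := pow_ne_zero _ hq0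
  field_simp

theorem stmt_14 (n : ℕ) (hn : 0 < n) :
    ∑ m ∈ n.divisors, ((Nat.totient m : ℚ) / (m : ℚ) ^ 2) *
        (∑ d ∈ (n / m).divisors, (Nat.totient (d * m) : ℚ) / (d : ℚ)) ^ 2
    = ∏ q ∈ n.primeFactors,
        ∑ β ∈ Finset.range (n.factorization q + 1),
          (Nat.totient (q ^ β) : ℚ) *
            ((1 - 1 / (q : ℚ)) * ((n.factorization q : ℚ) - (β : ℚ)) +
              (Nat.totient (q ^ β) : ℚ) / (q : ℚ) ^ β) ^ 2 := by
  have h1 : F n = n.factorization.prod fun p k => F (p ^ k) :=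
    Nat.multiplicative_factorization F (fun x y hxy => F_mul hxy) F_one hn.ne'
  have h2 : F n = ∏ q ∈ n.primeFactors, F (q ^ n.factorization q) := by
    rw [h1, Finsupp.prod, Nat.support_factorization]
  calc ∑ m ∈ n.divisors, ((Nat.totient m : ℚ) / (m : ℚ) ^ 2) *
        (∑ d ∈ (n / m).divisors, (Nat.totient (d * m) : ℚ) / (d : ℚ)) ^ 2
      = F n := rfl
    _ = ∏ q ∈ n.primeFactors, F (q ^ n.factorization q) := h2
    _ = _ := by
        apply Finset.prod_congr rfl
        intro q hq
        exact F_pp (Nat.prime_of_mem_primeFactors hq) (n.factorization q)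
end

section
/- Let p be a prime and let h, a be integers with 1 ≤ h, a ≤ p−1 such that h^h ≡ a^a (mod p), gcd(h, p−1) = 1, and h is a primitive root mod p. Then gcd(a, p−1) = 1 and a is a primitive root mod p. -/
theorem stmt_17 (p : ℕ) (hp : p.Prime) (h a : ℕ)
    (hh1 : 1 ≤ h) (hh2 : h ≤ p - 1) (ha1 : 1 ≤ a) (ha2 : a ≤ p - 1)
    (hha : h ^ h ≡ a ^ a [MOD p])
    (hrp : Nat.gcd h (p - 1) = 1)
    (hpr : orderOf (h : ZMod p) = p - 1) :
    Nat.gcd a (p - 1) = 1 ∧ orderOf (a : ZMod p) = p - 1 := by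
  haveI : Fact p.Prime := ⟨hp⟩
  have hp1 : 1 ≤ p - 1 := Nat.le_sub_one_of_lt hp.one_lt
  -- a as element of ZMod p is nonzero
  have hane : (a : ZMod p) ≠ 0 := by
    intro h0
    have : p ∣ a := (ZMod.natCast_eq_zero_iff a p).mp h0
    have : p ≤ a := Nat.le_of_dvd ha1 this
    omega
  have hdvd : orderOf (a : ZMod p) ∣ p - 1 := by
    apply orderOf_dvd_of_pow_eq_one
    exact ZMod.pow_card_sub_one_eq_one hane
  -- cast the congruence
  have hcast : ((h : ZMod p)) ^ h = ((a : ZMod p)) ^ a := by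
    have := (ZMod.natCast_eq_natCast_iff _ _ _).mpr hha
    push_cast at this
    exact this
  -- order of h^h is p-1
  have hohh : orderOf ((h : ZMod p) ^ h) = p - 1 := by
    rw [orderOf_pow' _ (by omega : h ≠ 0), hpr, Nat.gcd_comm, hrp, Nat.div_one]
  have hoaa : orderOf ((a : ZMod p) ^ a) = p - 1 := by rw [← hcast]; exact hohh
  rw [orderOf_pow' _ (by omega : a ≠ 0)] at hoaa
  set d := orderOf (a : ZMod p) with hd
  set g := Nat.gcd d a with hg
  have hgd : g ∣ d := Nat.gcd_dvd_left _ _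
  have hdle : d ≤ p - 1 := Nat.le_of_dvd hp1 hdvd
  have hgpos : 0 < g := Nat.gcd_pos_of_pos_right _ ha1
  have hde : d = g * (p - 1) := by
    rw [← hoaa]; exact (Nat.mul_div_cancel' hgd).symm
  have hg1 : g = 1 := by nlinarith [hgpos, hp1, hdle, hde]
  have hdp : d = p - 1 := by rw [hde, hg1, one_mul]
  refine ⟨?_, hdp⟩
  have h2 := hg1
  rw [hg] at h2
  rw [Nat.gcd_comm, ← hdp]
  exact h2
end

section
/- Let p be a prime. The number of triples (g,h,a) with 1 ≤ g, h, a ≤ p−1 satisfying g^h ≡ a (mod p), g^a ≡ h (mod p), and h a primitive root mod p equals the number of pairs (h,a) with 1 ≤ h, a ≤ p−1 satisfying h^h ≡ a^a (mod p), h a primitive root mod p, and gcd(a, p−1) = 1. -/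
section aux

variable {p : ℕ}

private lemma aux_cast_ne_zero (hp : p.Prime) {x : ℕ} (h1 : 1 ≤ x) (h2 : x ≤ p - 1) :
    (x : ZMod p) ≠ 0 := by
  rw [Ne, ZMod.natCast_eq_zero_iff]
  intro hdvd
  have := Nat.le_of_dvd (by omega) hdvd
  have := hp.two_le
  omega

private lemma aux_pow_congr (hp : p.Prime) {x : ZMod p} (hx : x ≠ 0) {m n : ℕ}
    (h : m ≡ n [MOD p - 1]) : x ^ m = x ^ n := by
  haveI : Fact p.Prime := ⟨hp⟩
  have h1 : x ^ (p - 1) = 1 := ZMod.pow_card_sub_one_eq_one hx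
  have hd : orderOf x ∣ p - 1 := orderOf_dvd_of_pow_eq_one h1
  have h2 : m ≡ n [MOD orderOf x] := h.of_dvd hd
  rw [← pow_mod_orderOf x m, ← pow_mod_orderOf x n, h2]

private lemma aux_inv (hp : p.Prime) {a : ℕ} (h : Nat.gcd a (p - 1) = 1) :
    ∃ b : ℕ, a * b ≡ 1 [MOD p - 1] := by
  refine ⟨a ^ (Nat.totient (p - 1) - 1), ?_⟩
  have ht : 1 ≤ Nat.totient (p - 1) := Nat.totient_pos.mpr (by have := hp.two_le; omega)
  have : a * a ^ (Nat.totient (p - 1) - 1) = a ^ Nat.totient (p - 1) := by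
    rw [← pow_succ']
    congr 1
    omega
  rw [this]
  exact Nat.ModEq.pow_totient h

private lemma aux_gcd (hp : p.Prime) {g a : ℕ} (hg1 : 1 ≤ g) (hg2 : g ≤ p - 1) (ha1 : 1 ≤ a)
    (hord : orderOf ((g : ZMod p) ^ a) = p - 1) : Nat.gcd a (p - 1) = 1 := by
  haveI : Fact p.Prime := ⟨hp⟩
  have hp2 := hp.two_le
  have hgz : (g : ZMod p) ≠ 0 := aux_cast_ne_zero hp hg1 hg2
  have h1 : (g : ZMod p) ^ (p - 1) = 1 := ZMod.pow_card_sub_one_eq_one hgz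
  have hd : orderOf (g : ZMod p) ∣ p - 1 := orderOf_dvd_of_pow_eq_one h1
  have hle : orderOf (g : ZMod p) ≤ p - 1 := Nat.le_of_dvd (by omega) hd
  rw [orderOf_pow' _ (by omega : a ≠ 0)] at hord
  have hle2 : orderOf (g : ZMod p) / Nat.gcd (orderOf (g : ZMod p)) a
      ≤ orderOf (g : ZMod p) := Nat.div_le_self _ _
  have hordeq : orderOf (g : ZMod p) = p - 1 := by omega
  rw [hordeq] at hord
  have := Nat.div_eq_self.mp hord
  have : Nat.gcd (p - 1) a = 1 := by omega
  rwa [Nat.gcd_comm]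

end aux

open scoped Classical in
theorem stmt_18 (p : ℕ) (hp : p.Prime) :
    ((Finset.Icc 1 (p - 1) ×ˢ Finset.Icc 1 (p - 1) ×ˢ Finset.Icc 1 (p - 1)).filter
      (fun t : ℕ × ℕ × ℕ => t.1 ^ t.2.1 ≡ t.2.2 [MOD p] ∧ t.1 ^ t.2.2 ≡ t.2.1 [MOD p] ∧
        orderOf ((t.2.1 : ZMod p)) = p - 1)).card
    =
    ((Finset.Icc 1 (p - 1) ×ˢ Finset.Icc 1 (p - 1)).filter
      (fun ha : ℕ × ℕ => ha.1 ^ ha.1 ≡ ha.2 ^ ha.2 [MOD p] ∧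
        orderOf ((ha.1 : ZMod p)) = p - 1 ∧
        Nat.gcd ha.2 (p - 1) = 1)).card := by
  haveI : Fact p.Prime := ⟨hp⟩
  have hp2 := hp.two_le
  apply Finset.card_bij (fun t _ => (t.2.1, t.2.2))
  · -- maps into the target set
    rintro ⟨g, h, a⟩ ht
    simp only [Finset.mem_filter, Finset.mem_product, Finset.mem_Icc] at ht ⊢
    obtain ⟨⟨⟨hg1, hg2⟩, ⟨hh1, hh2⟩, ha1, ha2⟩, e1, e2, hord⟩ := ht
    refine ⟨⟨⟨hh1, hh2⟩, ha1, ha2⟩, ?_, hord, ?_⟩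
    · -- h^h ≡ a^a
      calc h ^ h ≡ (g ^ a) ^ h [MOD p] := (Nat.ModEq.pow h e2).symm
        _ = (g ^ h) ^ a := by rw [← pow_mul, ← pow_mul, Nat.mul_comm]
        _ ≡ a ^ a [MOD p] := Nat.ModEq.pow a e1
    · -- gcd(a, p-1) = 1
      have e2' : (g : ZMod p) ^ a = (h : ZMod p) := by
        have := (ZMod.natCast_eq_natCast_iff _ _ _).mpr e2
        push_cast at this
        exact this
      exact aux_gcd hp hg1 hg2 ha1 (by rw [e2', hord])
  · -- injectivity
    rintro ⟨g1, h, a⟩ ht1 ⟨g2, h', a'⟩ ht2 heq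
    simp only [Prod.mk.injEq] at heq
    obtain ⟨rfl, rfl⟩ := heq
    simp only [Finset.mem_filter, Finset.mem_product, Finset.mem_Icc] at ht1 ht2
    obtain ⟨⟨⟨hg1, hg2⟩, ⟨hh1, hh2⟩, ha1, ha2⟩, e1, e2, hord⟩ := ht1
    obtain ⟨⟨⟨hg1', hg2'⟩, -, -⟩, e1', e2', -⟩ := ht2
    have e2c : (g1 : ZMod p) ^ a = (h : ZMod p) := by
      have := (ZMod.natCast_eq_natCast_iff _ _ _).mpr e2; push_cast at this; exact this
    have e2c' : (g2 : ZMod p) ^ a = (h : ZMod p) := by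
      have := (ZMod.natCast_eq_natCast_iff _ _ _).mpr e2'; push_cast at this; exact this
    have hgcd : Nat.gcd a (p - 1) = 1 := aux_gcd hp hg1 hg2 ha1 (by rw [e2c, hord])
    obtain ⟨b, hab⟩ := aux_inv hp hgcd
    have hgz1 : (g1 : ZMod p) ≠ 0 := aux_cast_ne_zero hp hg1 hg2
    have hgz2 : (g2 : ZMod p) ≠ 0 := aux_cast_ne_zero hp hg1' hg2'
    have : (g1 : ZMod p) = (g2 : ZMod p) := by
      calc (g1 : ZMod p) = (g1 : ZMod p) ^ 1 := (pow_one _).symm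
        _ = (g1 : ZMod p) ^ (a * b) := (aux_pow_congr hp hgz1 hab).symm
        _ = ((g1 : ZMod p) ^ a) ^ b := by rw [pow_mul]
        _ = ((g2 : ZMod p) ^ a) ^ b := by rw [e2c, e2c']
        _ = (g2 : ZMod p) ^ (a * b) := by rw [pow_mul]
        _ = (g2 : ZMod p) ^ 1 := aux_pow_congr hp hgz2 hab
        _ = (g2 : ZMod p) := pow_one _
    have : g1 ≡ g2 [MOD p] := (ZMod.natCast_eq_natCast_iff _ _ _).mp this
    have hmod : g1 % p = g2 % p := this
    rw [Nat.mod_eq_of_lt (by omega), Nat.mod_eq_of_lt (by omega)] at hmod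
    simp [hmod]
  · -- surjectivity
    rintro ⟨h, a⟩ hb
    simp only [Finset.mem_filter, Finset.mem_product, Finset.mem_Icc] at hb
    obtain ⟨⟨⟨hh1, hh2⟩, ha1, ha2⟩, eha, hord, hgcd⟩ := hb
    obtain ⟨b, hab⟩ := aux_inv hp hgcd
    have hhz : (h : ZMod p) ≠ 0 := aux_cast_ne_zero hp hh1 hh2
    have haz : (a : ZMod p) ≠ 0 := aux_cast_ne_zero hp ha1 ha2
    set G : ZMod p := (h : ZMod p) ^ b with hG
    have hGz : G ≠ 0 := pow_ne_zero _ hhz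
    refine ⟨(G.val, h, a), ?_, rfl⟩
    have hval1 : 1 ≤ G.val := by
      rcases Nat.eq_zero_or_pos G.val with h0 | h0
      · exact absurd ((ZMod.val_eq_zero _).mp h0) hGz
      · exact h0
    have hval2 : G.val < p := ZMod.val_lt G
    have hcastG : ((G.val : ℕ) : ZMod p) = G := by
      rw [ZMod.natCast_val, ZMod.cast_id]
    have ehacast : (h : ZMod p) ^ h = (a : ZMod p) ^ a := by
      have := (ZMod.natCast_eq_natCast_iff _ _ _).mpr eha; push_cast at this; exact this
    simp only [Finset.mem_filter, Finset.mem_product, Finset.mem_Icc]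
    refine ⟨⟨⟨hval1, by omega⟩, ⟨hh1, hh2⟩, ha1, ha2⟩, ?_, ?_, hord⟩
    · -- G.val ^ h ≡ a [MOD p]
      rw [← ZMod.natCast_eq_natCast_iff]
      push_cast
      rw [hcastG, hG, ← pow_mul, mul_comm, pow_mul, ehacast, ← pow_mul]
      calc (a : ZMod p) ^ (a * b) = (a : ZMod p) ^ 1 := aux_pow_congr hp haz hab
        _ = (a : ZMod p) := pow_one _
    · -- G.val ^ a ≡ h [MOD p]
      rw [← ZMod.natCast_eq_natCast_iff]
      push_cast
      rw [hcastG, hG, ← pow_mul, mul_comm b a]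
      calc (h : ZMod p) ^ (a * b) = (h : ZMod p) ^ 1 := aux_pow_congr hp hhz hab
        _ = (h : ZMod p) := pow_one _
end
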